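/- Let f₂(S) = C(|S|,2) be the graphical valuation counting pairs in S, on m items. Every set function f of supermodular degree d approximates f₂ within ratio no better than m/(d+1) − 1. In particular the supermodular degree of f₂ is Ω(m). -/

import Mathlib

open Finset

/-- `j'` supermodularly depends on `j`: there is a set `S` such that the marginal value
of `j` given `S ∪ {j'}` exceeds the marginal value of `j` given `S`. -/
def SupDep {ι : Type*} [DecidableEq ι] (f : Finset ι → ℝ) (j j' : ι) : Prop :=
  ∃ S : Finset ι,
    f (insert j S) - f S < f (insert j (insert j' S)) - f (insert j' S)

lemma supdep_not {ι : Type*} [DecidableEq ι] {f : Finset ι → ℝ} {a b : ι}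
    (h : ¬ SupDep f a b) (S : Finset ι) :
    f (insert a (insert b S)) - f (insert b S) ≤ f (insert a S) - f S := by
  by_contra hc
  exact h ⟨S, by linarith⟩

lemma peel {ι : Type*} [DecidableEq ι] (f : Finset ι → ℝ) (a : ι) (S B : Finset ι)
    (hS : ∀ j' ∈ S, ¬ SupDep f a j') :
    f (insert a (S ∪ B)) - f (S ∪ B) ≤ f (insert a B) - f B := by
  induction S using Finset.induction_on with
  | empty => simp
  | @insert x S hx ih =>
    rw [Finset.insert_union]
    have h1 := supdep_not (hS x (Finset.mem_insert_self x S)) (S ∪ B)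
    have h2 := ih (fun j' hj' => hS j' (Finset.mem_insert_of_mem hj'))
    linarith

lemma bound {ι : Type*} [DecidableEq ι] (f : Finset ι → ℝ) (ρ₂ : ℝ)
    (h0 : f ∅ = 0)
    (hpair : ∀ a b : ι, a ≠ b → f {a, b} ≤ ρ₂) :
    ∀ (n : ℕ) (l : List ι), l.length = n → 2 ≤ n → l.Nodup →
      l.Pairwise (fun a b => ¬ SupDep f a b) →
      2 * f l.toFinset ≤ (n : ℝ) * ρ₂ := by
  intro n
  induction n using Nat.strong_induction_on with
  | _ n ih =>
    intro l hlen h2 hnd hp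
    rcases eq_or_lt_of_le h2 with h2' | h3
    · obtain ⟨a, b, rfl⟩ := List.length_eq_two.mp (by omega : l.length = 2)
      have hab : a ≠ b := by
        have := List.nodup_cons.mp hnd
        simpa using this.1
      have hset : ([a, b].toFinset : Finset ι) = {a, b} := by simp
      rw [hset, ← h2']
      have := hpair a b hab
      push_cast
      linarith
    · -- 3 ≤ n
      set L := l.toFinset with hL
      set g : ℕ → ℝ := fun i => f (l.take i).toFinset with hg
      have htel : ∑ i ∈ Finset.range n, (g (i+1) - g i) = f L := by
        rw [Finset.sum_range_sub g n]
        have h1 : l.take n = l := by rw [← hlen]; exact List.take_length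
        simp [hg, h1, h0, hL]
      have key : ∀ i, i < n → f L - f ((l.eraseIdx i).toFinset) ≤ g (i+1) - g i := by
        intro i hi
        have hi' : i < l.length := by omega
        have hdropc : l.drop i = l[i] :: l.drop (i+1) := List.drop_eq_getElem_cons hi'
        have hnd' : ∀ b ∈ (l.drop (i+1)).toFinset, ¬ SupDep f l[i] b := by
          intro b hb
          have hpd := hp.sublist (List.drop_sublist i l)
          rw [hdropc, List.pairwise_cons] at hpd
          exact hpd.1 b (List.mem_toFinset.mp hb)
        have hpe := peel f l[i] (l.drop (i+1)).toFinset (l.take i).toFinset hnd'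
        have hLi : L = insert l[i] ((l.drop (i+1)).toFinset ∪ (l.take i).toFinset) := by
          conv_lhs => rw [hL, show l = l.take i ++ l.drop i from (List.take_append_drop i l).symm]
          rw [hdropc, List.toFinset_append, List.toFinset_cons]
          ext x; simp; tauto
        have hEi : (l.eraseIdx i).toFinset = (l.drop (i+1)).toFinset ∪ (l.take i).toFinset := by
          rw [List.eraseIdx_eq_take_drop_succ, List.toFinset_append, Finset.union_comm]
        have hgi : g (i+1) = f (insert l[i] (l.take i).toFinset) := by
          simp only [hg]
          congr 1
          rw [List.take_succ, List.getElem?_eq_getElem hi', Option.toList_some,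
            List.toFinset_append, List.toFinset_cons, List.toFinset_nil,
            Finset.union_comm, Finset.insert_union, Finset.empty_union]
        rw [hLi, hEi, hgi]
        exact hpe
      have hsum1 : ∑ i ∈ Finset.range n, (f L - f ((l.eraseIdx i).toFinset)) ≤
          ∑ i ∈ Finset.range n, (g (i+1) - g i) :=
        Finset.sum_le_sum (fun i hi => key i (Finset.mem_range.mp hi))
      rw [htel] at hsum1
      have hsum2 : (n : ℝ) * f L - ∑ i ∈ Finset.range n, f ((l.eraseIdx i).toFinset) ≤ f L := by
        rw [Finset.sum_sub_distrib, Finset.sum_const, Finset.card_range, nsmul_eq_mul] at hsum1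
        exact hsum1
      have hIH : ∀ i ∈ Finset.range n, f ((l.eraseIdx i).toFinset) ≤ ((n : ℝ) - 1) * ρ₂ / 2 := by
        intro i hi
        have hi' : i < l.length := by rw [hlen]; exact Finset.mem_range.mp hi
        have hsub := List.eraseIdx_sublist l i
        have hlen' : (l.eraseIdx i).length = n - 1 := by
          rw [List.length_eraseIdx, if_pos hi', hlen]
        have := ih (n-1) (by omega) (l.eraseIdx i) hlen' (by omega)
          (hnd.sublist hsub) (hp.sublist hsub)
        have hcast : ((n - 1 : ℕ) : ℝ) = (n : ℝ) - 1 := by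
          have : (1:ℕ) ≤ n := by omega
          push_cast [this]; ring
        rw [hcast] at this
        linarith
      have hsum3 : ∑ i ∈ Finset.range n, f ((l.eraseIdx i).toFinset) ≤
          (n : ℝ) * (((n : ℝ) - 1) * ρ₂ / 2) := by
        calc ∑ i ∈ Finset.range n, f ((l.eraseIdx i).toFinset)
            ≤ ∑ _i ∈ Finset.range n, ((n : ℝ) - 1) * ρ₂ / 2 := Finset.sum_le_sum hIH
          _ = (n : ℝ) * (((n : ℝ) - 1) * ρ₂ / 2) := by
              rw [Finset.sum_const, Finset.card_range, nsmul_eq_mul]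
      have hn1 : (0 : ℝ) < (n : ℝ) - 1 := by
        have : (3 : ℝ) ≤ (n : ℝ) := by exact_mod_cast h3
        linarith
      have hfin : ((n : ℝ) - 1) * (2 * f L) ≤ ((n : ℝ) - 1) * ((n : ℝ) * ρ₂) := by nlinarith
      have := (mul_le_mul_iff_of_pos_left hn1).mp hfin
      linarith

lemma greedy {ι : Type*} [Fintype ι] [DecidableEq ι] (f : Finset ι → ℝ) (d : ℕ)
    (hdeg : ∀ j : ι, ({j' | j' ≠ j ∧ SupDep f j j'} : Set ι).ncard ≤ d)
    (R : Finset ι) : ∃ l : List ι, l.toFinset ⊆ R ∧ l.Nodup ∧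
      l.Pairwise (fun a b => ¬ SupDep f a b) ∧ R.card ≤ (d + 1) * l.length := by
  classical
  induction R using Finset.strongInduction with
  | _ R ih =>
    rcases R.eq_empty_or_nonempty with rfl | ⟨j, hj⟩
    · exact ⟨[], by simp⟩
    · set D := R.filter (fun j' => j' ≠ j ∧ SupDep f j j') with hDdef
      have hD : D.card ≤ d := by
        have hsub : ↑D ⊆ ({j' | j' ≠ j ∧ SupDep f j j'} : Set ι) := by
          intro x hx
          simp only [hDdef, Finset.coe_filter, Set.mem_setOf_eq] at hx
          exact hx.2
        calc D.card = (↑D : Set ι).ncard := (Set.ncard_coe_finset _).symm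
          _ ≤ ({j' | j' ≠ j ∧ SupDep f j j'} : Set ι).ncard :=
              Set.ncard_le_ncard hsub (Set.toFinite _)
          _ ≤ d := hdeg j
      have hss : R \ insert j D ⊂ R := by
        refine (Finset.ssubset_iff_of_subset Finset.sdiff_subset).mpr ⟨j, hj, ?_⟩
        simp
      obtain ⟨l, hl1, hl2, hl3, hl4⟩ := ih _ hss
      refine ⟨j :: l, ?_, ?_, ?_, ?_⟩
      · intro x hx
        simp only [List.toFinset_cons, Finset.mem_insert] at hx
        rcases hx with rfl | hx
        · exact hj
        · exact (Finset.sdiff_subset) (hl1 hx)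
      · refine List.nodup_cons.mpr ⟨fun hmem => ?_, hl2⟩
        have := hl1 (List.mem_toFinset.mpr hmem)
        simp at this
      · refine List.pairwise_cons.mpr ⟨fun b hb => ?_, hl3⟩
        have hbR := hl1 (List.mem_toFinset.mpr hb)
        rw [Finset.mem_sdiff, Finset.mem_insert] at hbR
        intro hsd
        rcases eq_or_ne b j with rfl | hne
        · exact hbR.2 (Or.inl rfl)
        · exact hbR.2 (Or.inr (Finset.mem_filter.mpr ⟨hbR.1, hne, hsd⟩))
      · have h1 : R.card ≤ (R \ insert j D).card + (insert j D).card :=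
          Finset.card_le_card_sdiff_add_card
        have h2 : (insert j D).card ≤ d + 1 := by
          calc (insert j D).card ≤ D.card + 1 := Finset.card_insert_le _ _
            _ ≤ d + 1 := by omega
        simp only [List.length_cons]
        calc R.card ≤ (d + 1) * l.length + (d + 1) := by omega
          _ = (d + 1) * (l.length + 1) := by ring


/-- Every normalized monotone set function of supermodular degree `d` approximates
`f₂ S = C(|S|,2)` within a ratio no better than `m/(d+1) − 1`. -/
theorem supermodular_degree_cannot_approximate_pairs {ι : Type*} [Fintype ι]
    [DecidableEq ι] (d : ℕ) (f : Finset ι → ℝ) (h0 : f ∅ = 0)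
    (hmono : ∀ S T : Finset ι, S ⊆ T → f S ≤ f T)
    (hdeg : ∀ j : ι, ({j' | j' ≠ j ∧ SupDep f j j'} : Set ι).ncard ≤ d)
    (f₂ : Finset ι → ℝ) (hf₂ : ∀ S : Finset ι, f₂ S = (S.card.choose 2 : ℝ))
    (ρ₁ ρ₂ : ℝ) (hρ₁ : 0 < ρ₁) (hρ : ρ₁ ≤ ρ₂)
    (hratio : ∀ S : Finset ι, 0 < f₂ S → ρ₁ ≤ f S / f₂ S ∧ f S / f₂ S ≤ ρ₂) :
    (Fintype.card ι : ℝ) / (d + 1) - 1 ≤ ρ₂ / ρ₁ := by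
  classical
  by_cases hm : (Fintype.card ι : ℝ) / (d + 1) ≤ 2
  · have h1 : (1:ℝ) ≤ ρ₂ / ρ₁ := (one_le_div hρ₁).mpr hρ
    linarith
  push_neg at hm
  obtain ⟨l, _, hnd, hpw, hcard⟩ := greedy f d hdeg Finset.univ
  rw [Finset.card_univ] at hcard
  set t := l.length with htdef
  have hd1 : (0:ℝ) < (d:ℝ) + 1 := by positivity
  have ht : (Fintype.card ι : ℝ) / ((d:ℝ) + 1) ≤ (t:ℝ) := by
    rw [div_le_iff₀ hd1]
    calc (Fintype.card ι : ℝ) ≤ (((d+1) * t : ℕ) : ℝ) := by exact_mod_cast hcard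
      _ = (t:ℝ) * ((d:ℝ)+1) := by push_cast; ring
  have ht3 : 2 < (t:ℝ) := lt_of_lt_of_le hm ht
  have ht2 : 2 ≤ t := by exact_mod_cast ht3.le
  have hpair : ∀ a b : ι, a ≠ b → f {a, b} ≤ ρ₂ := by
    intro a b hab
    have hc : ({a, b} : Finset ι).card = 2 := Finset.card_pair hab
    have hf2 : f₂ {a, b} = 1 := by rw [hf₂, hc]; norm_num
    have h := (hratio {a, b} (by rw [hf2]; norm_num)).2
    rwa [hf2, div_one] at h
  have hbound := bound f ρ₂ h0 hpair t l rfl ht2 hnd hpw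
  have hcardT : l.toFinset.card = t := List.toFinset_card_of_nodup hnd
  have hchoose : ((t.choose 2 : ℕ) : ℝ) = (t:ℝ) * ((t:ℝ) - 1) / 2 := Nat.cast_choose_two (K := ℝ) t
  have hf2T : f₂ l.toFinset = (t:ℝ) * ((t:ℝ) - 1) / 2 := by
    rw [hf₂, hcardT, hchoose]
  have hpos : 0 < f₂ l.toFinset := by rw [hf2T]; nlinarith
  have hlow := (hratio _ hpos).1
  rw [le_div_iff₀ hpos] at hlow
  rw [hf2T] at hlow
  have h6 : ρ₁ * ((t:ℝ) - 1) ≤ ρ₂ := by nlinarith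
  have h7 : (t:ℝ) - 1 ≤ ρ₂ / ρ₁ := by
    rw [le_div_iff₀ hρ₁]; linarith
  linarith
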